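/- Let G and H be transitive permutation groups on finite sets Γ and Δ with a (G×H)-invariant partition Π of Γ×Δ. Then the G-fibre partition refines the part of Π in the sense F_G × F_H ⪯ Π ⪯ P_G × P_H, where F_G, F_H are the fibre partitions and P_G, P_H the projection partitions. -/

import Mathlib

open Equiv

variable {Ω : Type*}

/-- `G` is a transitive permutation group on `Ω`. -/
def IsTransitive (G : Subgroup (Perm Ω)) : Prop :=
  ∀ x y : Ω, ∃ g ∈ G, g x = y

/-- The partition (setoid) `r` of `Ω` is `G`-invariant. -/
def IsInvariantPartition (G : Subgroup (Perm Ω)) (r : Setoid Ω) : Prop :=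
  ∀ g ∈ G, ∀ x y : Ω, r.r x y → r.r (g x) (g y)

/-- The partition `r` of `Ω` is the orbit partition of the permutation group `H`. -/
def IsOrbitPartition (H : Subgroup (Perm Ω)) (r : Setoid Ω) : Prop :=
  ∀ x y : Ω, r.r x y ↔ ∃ h ∈ H, h x = y

/-- `G` is pre-primitive: every `G`-invariant partition is the orbit partition
of a subgroup of `G`. -/
def IsPrePrimitive (G : Subgroup (Perm Ω)) : Prop :=
  ∀ r : Setoid Ω, IsInvariantPartition G r → ∃ H ≤ G, IsOrbitPartition H r

/-- `N` is a normal subgroup of the permutation group `G`. -/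
def IsNormalIn (N G : Subgroup (Perm Ω)) : Prop :=
  N ≤ G ∧ ∀ g ∈ G, ∀ n ∈ N, g * n * g⁻¹ ∈ N


/-- The coordinatewise (product) action homomorphism. -/
def prodPermHom (Γ Δ : Type*) : Perm Γ × Perm Δ →* Perm (Γ × Δ) where
  toFun p := Equiv.prodCongr p.1 p.2
  map_one' := by ext ⟨a, b⟩ <;> rfl
  map_mul' p q := by ext ⟨a, b⟩ <;> rfl

/-- The direct product `G × H` in its coordinatewise product action on `Γ × Δ`,
as a subgroup of `Perm (Γ × Δ)`. -/
def productAction {Γ Δ : Type*} (G : Subgroup (Perm Γ)) (H : Subgroup (Perm Δ)) :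
    Subgroup (Perm (Γ × Δ)) :=
  (G.prod H).map (prodPermHom Γ Δ)


/-- The sandwich `F_G × F_H ⪯ Π ⪯ P_G × P_H`: any pair related in both fibre
partitions is related in `Π`, and any pair related in `Π` is related in both
projection partitions. -/
theorem fibre_refines_invariant_refines_projection
    {Γ Δ : Type*} [Fintype Γ] [Fintype Δ]
    (G : Subgroup (Perm Γ)) (H : Subgroup (Perm Δ))
    (hG : IsTransitive G) (hH : IsTransitive H)
    (rP : Setoid (Γ × Δ)) (hrP : IsInvariantPartition (productAction G H) rP) :
    ∀ p q : Γ × Δ,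
      ((∃ δ : Δ, rP.r (p.1, δ) (q.1, δ)) ∧ (∃ γ : Γ, rP.r (γ, p.2) (γ, q.2)) →
        rP.r p q) ∧
      (rP.r p q →
        (∃ δ δ' : Δ, rP.r (p.1, δ) (q.1, δ')) ∧ (∃ γ γ' : Γ, rP.r (γ, p.2) (γ', q.2))) := by
  intro p q
  constructor
  · rintro ⟨⟨δ, h1⟩, ⟨γ, h2⟩⟩
    obtain ⟨h, hh, hδ⟩ := hH δ p.2
    obtain ⟨g, hg, hγ⟩ := hG γ q.1
    have m1 : prodPermHom Γ Δ (1, h) ∈ productAction G H :=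
      ⟨(1, h), ⟨Subgroup.one_mem G, hh⟩, rfl⟩
    have m2 : prodPermHom Γ Δ (g, 1) ∈ productAction G H :=
      ⟨(g, 1), ⟨hg, Subgroup.one_mem H⟩, rfl⟩
    have h1' := hrP _ m1 _ _ h1
    have h2' := hrP _ m2 _ _ h2
    simp only [prodPermHom, MonoidHom.coe_mk, OneHom.coe_mk, prodCongr_apply,
      Perm.coe_one, Prod.map_apply, id_eq, hδ, hγ] at h1' h2'
    have := rP.trans h1' h2'
    simpa using this
  · intro hpq
    exact ⟨⟨p.2, q.2, by simpa using hpq⟩, ⟨p.1, q.1, by simpa using hpq⟩⟩
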